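/- For c ≥ 3, the double occurrence word v1 vc v2 v1 v3 v2 v4 v3 ... v_{c-1} v_{c-2} vc v_{c-1} has interlacement graph equal to the cycle C_c with vertices v1, ..., vc in cyclic order. -/

import Mathlib

open SimpleGraph

/-- Two letters are interlaced in a word if their occurrences alternate. -/
def Interlaced {α : Type} [DecidableEq α] (W : List α) (a b : α) : Prop :=
  W.filter (fun x => x == a || x == b) = [a, b, a, b] ∨
  W.filter (fun x => x == a || x == b) = [b, a, b, a]

/-- The interlacement graph of a word. -/
def interlacementGraph {α : Type} [DecidableEq α] (W : List α) : SimpleGraph α where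
  Adj a b := a ≠ b ∧ (Interlaced W a b ∨ Interlaced W b a)
  symm := ⟨fun a b h => ⟨h.1.symm, h.2.symm⟩⟩
  loopless := ⟨fun a h => h.1 rfl⟩

/-- A double occurrence word: each letter of the alphabet occurs exactly twice. -/
def IsDOW {α : Type} [DecidableEq α] (W : List α) : Prop := ∀ a : α, W.count a = 2

/-- A circle graph: a graph isomorphic to the interlacement graph of a
double occurrence word. -/
def IsCircleGraph {V : Type} (G : SimpleGraph V) : Prop :=
  ∃ (n : ℕ) (W : List (Fin n)), IsDOW W ∧ Nonempty (G ≃g interlacementGraph W)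

/-- Local complementation at a vertex `v`: toggle adjacency inside `N(v)`. -/
def localComplement {V : Type} (G : SimpleGraph V) (v : V) : SimpleGraph V where
  Adj x y := x ≠ y ∧ ((G.Adj v x ∧ G.Adj v y ∧ ¬ G.Adj x y) ∨
    (¬ (G.Adj v x ∧ G.Adj v y) ∧ G.Adj x y))
  symm := by
    refine ⟨?_⟩
    rintro x y ⟨hxy, h | h⟩
    · exact ⟨hxy.symm, Or.inl ⟨h.2.1, h.1, fun hc => h.2.2 hc.symm⟩⟩
    · exact ⟨hxy.symm, Or.inr ⟨fun hc => h.1 ⟨hc.2, hc.1⟩, h.2.symm⟩⟩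
  loopless := ⟨fun x h => h.1 rfl⟩

/-- A split `(V1, X1; V2, X2)` of a graph. -/
def IsSplit {V : Type} (G : SimpleGraph V) (V1 X1 V2 X2 : Set V) : Prop :=
  V1 ∪ V2 = Set.univ ∧ Disjoint V1 V2 ∧ 2 ≤ V1.encard ∧ 2 ≤ V2.encard ∧
  X1 ⊆ V1 ∧ X2 ⊆ V2 ∧ ∀ x ∈ V1, ∀ y ∈ V2, (G.Adj x y ↔ x ∈ X1 ∧ y ∈ X2)

/-- A graph has a split. -/
def HasSplit {V : Type} (G : SimpleGraph V) : Prop :=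
  ∃ V1 X1 V2 X2, IsSplit G V1 X1 V2 X2

/-- Twin vertices: same neighbours outside `{u, v}`. -/
def IsTwinPair {V : Type} (G : SimpleGraph V) (u v : V) : Prop :=
  u ≠ v ∧ G.neighborSet u \ {v} = G.neighborSet v \ {u}

/-- Adjacent twins. -/
def AdjacentTwins {V : Type} (G : SimpleGraph V) (u v : V) : Prop :=
  G.Adj u v ∧ G.neighborSet u \ {v} = G.neighborSet v \ {u}

/-- Nonadjacent twins. -/
def NonadjacentTwins {V : Type} (G : SimpleGraph V) (u v : V) : Prop :=
  u ≠ v ∧ ¬ G.Adj u v ∧ G.neighborSet u = G.neighborSet v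

/-- Delete a vertex: keep the vertex set, remove all edges at `v`. -/
def deleteVertex {V : Type} (G : SimpleGraph V) (v : V) : SimpleGraph V where
  Adj x y := G.Adj x y ∧ x ≠ v ∧ y ≠ v
  symm := ⟨fun x y h => ⟨h.1.symm, h.2.2, h.2.1⟩⟩
  loopless := ⟨fun x h => G.loopless.1 x h.1⟩

/-- `v` is a cutpoint of the connected graph `G`. -/
def IsCutpoint {V : Type} (G : SimpleGraph V) (v : V) : Prop :=
  G.Connected ∧ ∃ x y : V, x ≠ v ∧ y ≠ v ∧ ¬ (deleteVertex G v).Reachable x y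

/-- Cyclic equivalence of words: generated by rotations and reversals. -/
inductive CyclicEquiv {β : Type} : List β → List β → Prop
  | refl (l : List β) : CyclicEquiv l l
  | rot (l₁ l₂ : List β) : CyclicEquiv (l₁ ++ l₂) (l₂ ++ l₁)
  | rev (l : List β) : CyclicEquiv l l.reverse
  | symm {l₁ l₂ : List β} : CyclicEquiv l₁ l₂ → CyclicEquiv l₂ l₁
  | trans {l₁ l₂ l₃ : List β} : CyclicEquiv l₁ l₂ → CyclicEquiv l₂ l₃ → CyclicEquiv l₁ l₃

/-- `G` is 3-connected: more than 3 vertices, and removing fewer than 3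
vertices leaves it connected. -/
def ThreeConnected {V : Type} [Fintype V] (G : SimpleGraph V) : Prop :=
  3 < Fintype.card V ∧ ∀ K : Set V, K.ncard < 3 → (G.induce (Kᶜ : Set V)).Connected

/-- The disjoint union of two graphs, joined by a single edge from `a` to `b`. -/
def joinedByEdge {V₁ V₂ : Type} (G₁ : SimpleGraph V₁) (G₂ : SimpleGraph V₂)
    (a : V₁) (b : V₂) : SimpleGraph (V₁ ⊕ V₂) where
  Adj x y :=
    Sum.elim (fun u => Sum.elim (fun w => G₁.Adj u w) (fun w => u = a ∧ w = b) y)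
             (fun u => Sum.elim (fun w => u = b ∧ w = a) (fun w => G₂.Adj u w) y) x
  symm := by
    refine ⟨?_⟩
    rintro (u | u) (w | w) h
    · exact h.symm
    · exact ⟨h.2, h.1⟩
    · exact ⟨h.2, h.1⟩
    · exact h.symm
  loopless := by
    refine ⟨?_⟩
    rintro (u | u) h
    · exact G₁.loopless.1 u h
    · exact G₂.loopless.1 u h

/-- The standard word whose interlacement graph is the cycle `C_c`. -/
def cycleWord (c : ℕ) : List ℕ :=
  0 :: (c - 1) :: (List.range (c - 1)).flatMap (fun k => [k + 1, k])

/-- The cycle `C_c` on vertices `0, ..., c-1` (all other naturals isolated). -/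
def cycleGraphOn (c : ℕ) : SimpleGraph ℕ :=
  SimpleGraph.fromRel (fun i j => i < c ∧ j < c ∧ (i + 1) % c = j)

lemma flatMap_filter_succ (p : ℕ → Bool) (n : ℕ) :
    ((List.range (n+1)).flatMap fun k => [k+1,k]).filter p
      = (((List.range n).flatMap fun k => [k+1,k]).filter p) ++ ([n+1,n].filter p) := by
  rw [List.range_succ, List.flatMap_append, List.filter_append]
  simp

def occT (v n : ℕ) : List ℕ := if n < v then [] else if n = v then [v] else [v, v]
def occA (a n : ℕ) : List ℕ := if a = 0 then (if n = 0 then [] else [0]) else occT a n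

lemma lemA (a b n : ℕ) (h : a + 1 < b) :
    ((List.range n).flatMap fun k => [k+1,k]).filter (fun t => t == a || t == b)
      = occA a n ++ occT b n := by
  induction n with
  | zero => unfold occA occT; split_ifs <;> simp_all <;> omega
  | succ n ih =>
    rw [flatMap_filter_succ, ih]
    unfold occA occT
    by_cases h1 : n+1 = a <;> by_cases h2 : n = a <;> by_cases h3 : n+1 = b <;>
      by_cases h4 : n = b <;> simp [List.filter_cons, h1, h2, h3, h4] <;>
      split_ifs <;> simp_all <;> omega

def gB (a n : ℕ) : List ℕ :=
  (if 1 ≤ a ∧ a ≤ n then [a] else []) ++ (if a < n then [a+1, a] else []) ++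
    (if a+1 < n then [a+1] else [])

lemma lemB (a n : ℕ) :
    ((List.range n).flatMap fun k => [k+1,k]).filter (fun t => t == a || t == a+1)
      = gB a n := by
  induction n with
  | zero => unfold gB; split_ifs <;> simp_all <;> omega
  | succ n ih =>
    rw [flatMap_filter_succ, ih]
    unfold gB
    by_cases h1 : n+1 = a <;> by_cases h2 : n = a <;> by_cases h3 : n = a+1 <;>
      simp [List.filter_cons, h1, h2, h3] <;>
      split_ifs <;> simp_all <;> omega

lemma cycleWord_mem_lt (c x : ℕ) (hc : 1 ≤ c) (hx : x ∈ cycleWord c) : x < c := by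
  simp only [cycleWord, List.mem_cons, List.mem_flatMap, List.mem_range,
    List.mem_singleton, List.not_mem_nil, or_false] at hx
  rcases hx with h | h | ⟨k, hk, h | h⟩ <;> omega

lemma filter_swap (W : List ℕ) (a b : ℕ) :
    W.filter (fun x => x == b || x == a) = W.filter (fun x => x == a || x == b) :=
  List.filter_congr fun x _ => by rw [Bool.or_comm]

lemma adj_iff (W : List ℕ) (a b : ℕ) :
    (interlacementGraph W).Adj a b ↔ a ≠ b ∧
      (W.filter (fun x => x == a || x == b) = [a,b,a,b] ∨
       W.filter (fun x => x == a || x == b) = [b,a,b,a]) := by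
  show a ≠ b ∧ _ ↔ _
  unfold Interlaced
  rw [filter_swap W a b]
  tauto

lemma filter_cycleWord (c a b : ℕ) (hab : a < b) (hbc : b < c) :
    (cycleWord c).filter (fun x => x == a || x == b) =
      (if a = 0 then [0] else []) ++ (if b = c - 1 then [c-1] else []) ++
      (if b = a + 1 then gB a (c-1) else occA a (c-1) ++ occT b (c-1)) := by
  unfold cycleWord
  rw [List.filter_cons, List.filter_cons]
  by_cases hb : b = a + 1
  · rw [if_pos hb]; subst hb; rw [lemB a (c-1)]
    by_cases h1 : a = 0 <;> by_cases h2 : a + 1 = c - 1 <;>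
      simp [h1, h2, Nat.sub_eq_zero_iff_le] <;> (try split_ifs) <;>
      first | omega | simp | (simp; omega)
  · rw [if_neg hb]
    rw [lemA a b (c-1) (by omega)]
    have hb0 : ¬ (0 = b) := by omega
    have hca : ¬ (c - 1 = a) := by omega
    by_cases h1 : a = 0 <;> by_cases h2 : b = c - 1 <;>
      simp [h1, h2, hb0, hca] <;> (try split_ifs) <;>
      first | omega | simp | (simp; omega)

lemma cw_main (c a b : ℕ) (hc : 3 ≤ c) (hab : a < b) :
    (interlacementGraph (cycleWord c)).Adj a b ↔ (cycleGraphOn c).Adj a b := by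
  rw [adj_iff, cycleGraphOn, SimpleGraph.fromRel_adj]
  by_cases hbc : b < c
  · have hac : a < c := lt_trans hab hbc
    have m1 : (a+1) % c = if a + 1 = c then 0 else a+1 := by
      split_ifs with h
      · rw [h, Nat.mod_self]
      · exact Nat.mod_eq_of_lt (by omega)
    have m2 : (b+1) % c = if b + 1 = c then 0 else b+1 := by
      split_ifs with h
      · rw [h, Nat.mod_self]
      · exact Nat.mod_eq_of_lt (by omega)
    rw [filter_cycleWord c a b hab hbc, m1, m2]
    unfold gB occA occT
    split_ifs <;> first | omega | (simp; try omega)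
  · constructor
    · rintro ⟨hne, h | h⟩ <;>
      · exfalso
        have hb : b ∈ (cycleWord c).filter (fun x => x == a || x == b) := by
          rw [h]; simp
        have := cycleWord_mem_lt c b (by omega) (List.mem_of_mem_filter hb)
        omega
    · rintro ⟨hne, h | h⟩ <;> omega

/-- For `c ≥ 3` the word `v₁ v_c v₂ v₁ v₃ v₂ ... v_{c-1} v_{c-2} v_c v_{c-1}`
has interlacement graph the cycle `C_c`. -/
theorem stmt12 (c : ℕ) (hc : 3 ≤ c) :
    interlacementGraph (cycleWord c) = cycleGraphOn c := by
  ext a b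
  rcases lt_trichotomy a b with h | h | h
  · exact cw_main c a b hc h
  · subst h
    simp only [SimpleGraph.irrefl]
  · rw [(interlacementGraph (cycleWord c)).adj_comm, (cycleGraphOn c).adj_comm]
    exact cw_main c b a hc h
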